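/- Let X be a separable F-space and let (T_a)_{a∈ℝ^d} be an operator group on X. Assume there exist a dense set D ⊆ X and a real number p > d such that for any f ∈ D there exists A > 0 with ‖T_a f‖ ≤ A/‖a‖^p for any a ∈ ℝ^d with ‖a‖ ≥ 1. Then (T_a)_{a∈ℝ^d} has the uniform mixing property. -/

import Mathlib

open MeasureTheory Metric Finset
open scoped ENNReal

/-- Counting lemma: `C`-separated points within distance `R` of `b` number at most
`((R + C/2)/(C/2))^d`, by a volume argument. -/
lemma sep_card_le {d q : ℕ} {C R : ℝ} (hC : 0 < C) (hR : 0 ≤ R)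
    (a : Fin q → EuclideanSpace ℝ (Fin d)) (b : EuclideanSpace ℝ (Fin d))
    (hsep : ∀ i j, i ≠ j → C ≤ ‖a i - a j‖)
    (s : Finset (Fin q)) (hs : ∀ i ∈ s, ‖a i - b‖ ≤ R) :
    (s.card : ℝ) * (C / 2) ^ d ≤ (R + C / 2) ^ d := by
  have hvol1 : volume (ball (0 : EuclideanSpace ℝ (Fin d)) 1) ≠ 0 :=
    (measure_ball_pos _ _ one_pos).ne'
  have hvol2 : volume (ball (0 : EuclideanSpace ℝ (Fin d)) 1) ≠ ⊤ :=
    measure_ball_lt_top.ne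
  have hdisj : (↑s : Set (Fin q)).PairwiseDisjoint fun i => ball (a i) (C / 2) := by
    intro i _ j _ hij
    refine ball_disjoint_ball ?_
    rw [dist_eq_norm]
    linarith [hsep i j hij]
  have hmeas := measure_biUnion_finset (μ := volume) hdisj fun i _ => measurableSet_ball
  have hsub : (⋃ i ∈ s, ball (a i) (C / 2)) ⊆ ball b (R + C / 2) := by
    refine Set.iUnion₂_subset fun i hi x hx => ?_
    rw [mem_ball] at hx ⊢
    have hib : dist (a i) b ≤ R := by rw [dist_eq_norm]; exact hs i hi
    calc dist x b ≤ dist x (a i) + dist (a i) b := dist_triangle _ _ _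
      _ < C / 2 + R := by linarith
      _ = R + C / 2 := by ring
  have hle : ∑ i ∈ s, volume (ball (a i) (C / 2)) ≤ volume (ball b (R + C / 2)) := by
    rw [← hmeas]; exact measure_mono hsub
  have hfr : Module.finrank ℝ (EuclideanSpace ℝ (Fin d)) = d := finrank_euclideanSpace_fin
  rw [Measure.addHaar_ball_of_pos volume b (by linarith : (0:ℝ) < R + C / 2), hfr] at hle
  have hball : ∀ i ∈ s, volume (ball (a i) (C / 2)) =
      ENNReal.ofReal ((C / 2) ^ d) * volume (ball (0 : EuclideanSpace ℝ (Fin d)) 1) := by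
    intro i _
    rw [Measure.addHaar_ball_of_pos volume (a i) (by linarith : (0:ℝ) < C / 2), hfr]
  rw [Finset.sum_congr rfl hball, Finset.sum_const, nsmul_eq_mul, ← mul_assoc] at hle
  rw [ENNReal.mul_le_mul_iff_left hvol1 hvol2] at hle
  have hcast : ((s.card : ℝ≥0∞)) = ENNReal.ofReal (s.card : ℝ) := by simp
  rw [hcast, ← ENNReal.ofReal_mul (by positivity)] at hle
  exact (ENNReal.ofReal_le_ofReal_iff (by positivity)).mp hle

/-- Summation lemma: for `C`-separated points all at distance at least `C` from `b`,
the sum of `A / ‖a i - b‖ ^ p` is at most `A * 8^d * (1 - 2^(d-p))⁻¹ / C^p`. -/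
lemma sep_sum_decay {d q : ℕ} {p A C : ℝ} (hp : (d : ℝ) < p) (hA : 0 ≤ A) (hC : 1 ≤ C)
    (a : Fin q → EuclideanSpace ℝ (Fin d)) (b : EuclideanSpace ℝ (Fin d))
    (hsep : ∀ i j, i ≠ j → C ≤ ‖a i - a j‖)
    (s : Finset (Fin q)) (hfar : ∀ i ∈ s, C ≤ ‖a i - b‖) :
    ∑ i ∈ s, A / ‖a i - b‖ ^ p ≤ A * 8 ^ d * (1 - 2 ^ ((d : ℝ) - p))⁻¹ / C ^ p := by
  have hC0 : (0:ℝ) < C := lt_of_lt_of_le one_pos hC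
  have hp0 : (0:ℝ) < p := lt_of_le_of_lt (Nat.cast_nonneg d) hp
  set r : ℝ := (2:ℝ) ^ ((d : ℝ) - p) with hrdef
  have hr0 : 0 < r := Real.rpow_pos_of_pos two_pos _
  have hr1 : r < 1 := Real.rpow_lt_one_of_one_lt_of_neg one_lt_two (by linarith)
  set m : Fin q → ℕ := fun i => ⌊Real.logb 2 (‖a i - b‖ / C)⌋₊ with hmdef
  have hCpos : (0:ℝ) < C ^ p := Real.rpow_pos_of_pos hC0 _
  have key1 : ∀ i ∈ s, (2:ℝ) ^ (m i) * C ≤ ‖a i - b‖ := by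
    intro i hi
    have hxC : 1 ≤ ‖a i - b‖ / C := (one_le_div hC0).mpr (hfar i hi)
    have hxpos : (0:ℝ) < ‖a i - b‖ / C := lt_of_lt_of_le one_pos hxC
    have hlogb : 0 ≤ Real.logb 2 (‖a i - b‖ / C) := Real.logb_nonneg one_lt_two hxC
    have h1 : ((2:ℝ) ^ (m i) : ℝ) ≤ ‖a i - b‖ / C := by
      calc (2:ℝ) ^ (m i) = (2:ℝ) ^ ((m i : ℝ)) := (Real.rpow_natCast 2 (m i)).symm
        _ ≤ (2:ℝ) ^ (Real.logb 2 (‖a i - b‖ / C)) :=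
            Real.rpow_le_rpow_of_exponent_le one_le_two (Nat.floor_le hlogb)
        _ = ‖a i - b‖ / C := Real.rpow_logb two_pos (by norm_num) hxpos
    exact (le_div_iff₀ hC0).mp h1
  have key2 : ∀ i ∈ s, ‖a i - b‖ ≤ (2:ℝ) ^ (m i + 1) * C := by
    intro i hi
    have hxC : 1 ≤ ‖a i - b‖ / C := (one_le_div hC0).mpr (hfar i hi)
    have hxpos : (0:ℝ) < ‖a i - b‖ / C := lt_of_lt_of_le one_pos hxC
    have h1 : ‖a i - b‖ / C ≤ (2:ℝ) ^ (m i + 1) := by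
      calc ‖a i - b‖ / C = (2:ℝ) ^ (Real.logb 2 (‖a i - b‖ / C)) :=
            (Real.rpow_logb two_pos (by norm_num) hxpos).symm
        _ ≤ (2:ℝ) ^ (((m i : ℝ) + 1)) := by
            apply Real.rpow_le_rpow_of_exponent_le one_le_two
            exact le_of_lt (Nat.lt_floor_add_one _)
        _ = (2:ℝ) ^ (m i + 1) := by
            rw [← Real.rpow_natCast 2 (m i + 1)]; push_cast; ring_nf
    exact (div_le_iff₀ hC0).mp h1
  set M : ℕ := s.sup m + 1 with hMdef
  have hmap : ∀ i ∈ s, m i ∈ Finset.range M := fun i hi =>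
    Finset.mem_range.mpr (Nat.lt_succ_of_le (Finset.le_sup hi))
  rw [← Finset.sum_fiberwise_of_maps_to hmap fun i => A / ‖a i - b‖ ^ p]
  have hterm : ∀ k ∈ Finset.range M,
      (∑ i ∈ s with m i = k, A / ‖a i - b‖ ^ p) ≤ A * 8 ^ d / C ^ p * r ^ k := by
    intro k _
    set t := s.filter fun i => m i = k with htdef
    have htsub : ∀ i ∈ t, i ∈ s := fun i hi => (Finset.mem_filter.mp hi).1
    have htm : ∀ i ∈ t, m i = k := fun i hi => (Finset.mem_filter.mp hi).2
    have hcard : (t.card : ℝ) * (C / 2) ^ d ≤ ((2:ℝ) ^ (k + 1) * C + C / 2) ^ d := by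
      apply sep_card_le hC0 (by positivity) a b hsep t
      intro i hi
      have h2 := key2 i (htsub i hi)
      rw [htm i hi] at h2
      exact h2
    have hX : (1:ℝ) ≤ (2:ℝ) ^ (k + 1) := one_le_pow₀ one_le_two
    have h2 : ((2:ℝ) ^ (k + 1) * C + C / 2) ^ d ≤ ((2:ℝ) ^ (k + 3)) ^ d * (C / 2) ^ d := by
      rw [← mul_pow]
      apply pow_le_pow_left₀ (by positivity)
      have he : (2:ℝ) ^ (k + 3) = 4 * (2:ℝ) ^ (k + 1) := by
        rw [show k + 3 = (k + 1) + 2 by omega, pow_add]; ring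
      rw [he]
      nlinarith [hC0.le, hX]
    have hcard' : (t.card : ℝ) ≤ ((2:ℝ) ^ (k + 3)) ^ d := by
      have hpos : (0:ℝ) < (C / 2) ^ d := by positivity
      have h3 := hcard.trans h2
      exact le_of_mul_le_mul_right h3 hpos
    have hterm1 : ∀ i ∈ t, A / ‖a i - b‖ ^ p ≤ A / ((2:ℝ) ^ k * C) ^ p := by
      intro i hi
      have h1 := key1 i (htsub i hi)
      rw [htm i hi] at h1
      apply div_le_div_of_nonneg_left hA (by positivity)
      exact Real.rpow_le_rpow (by positivity) h1 hp0.le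
    have hrw : ((2:ℝ) ^ (k + 3)) ^ d * (A / ((2:ℝ) ^ k * C) ^ p)
        = A * 8 ^ d / C ^ p * r ^ k := by
      have e1 : ((2:ℝ) ^ k * C) ^ p = (2:ℝ) ^ ((k : ℝ) * p) * C ^ p := by
        rw [Real.mul_rpow (by positivity) hC0.le, ← Real.rpow_natCast 2 k,
          ← Real.rpow_mul (by norm_num)]
      have e2 : ((2:ℝ) ^ (k + 3)) ^ d = (2:ℝ) ^ (((k : ℝ) + 3) * (d : ℝ)) := by
        rw [← pow_mul, ← Real.rpow_natCast 2 ((k + 3) * d)]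
        congr 1
        push_cast
        ring
      have e3 : (8:ℝ) ^ d = (2:ℝ) ^ (3 * (d : ℝ)) := by
        rw [show (8:ℝ) = 2 ^ (3:ℕ) by norm_num, ← pow_mul, ← Real.rpow_natCast 2 (3 * d)]
        congr 1
        push_cast
        ring
      have e4 : r ^ k = (2:ℝ) ^ (((d : ℝ) - p) * (k : ℝ)) := by
        rw [← Real.rpow_natCast r k, hrdef]
        exact (Real.rpow_mul (by norm_num) _ _).symm
      rw [e1, e2, e3, e4]
      have esplit : (2:ℝ) ^ (((k : ℝ) + 3) * (d : ℝ))
          = (2:ℝ) ^ ((k : ℝ) * p) * ((2:ℝ) ^ (3 * (d : ℝ)) * (2:ℝ) ^ (((d : ℝ) - p) * (k : ℝ))) := by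
        rw [← Real.rpow_add two_pos, ← Real.rpow_add two_pos]
        ring_nf
      rw [esplit]
      have h1 : ((2:ℝ) ^ ((k : ℝ) * p)) ≠ 0 := (Real.rpow_pos_of_pos two_pos _).ne'
      have h2 : (C:ℝ) ^ p ≠ 0 := hCpos.ne'
      field_simp
    calc ∑ i ∈ t, A / ‖a i - b‖ ^ p
        ≤ ∑ _i ∈ t, A / ((2:ℝ) ^ k * C) ^ p := Finset.sum_le_sum hterm1
      _ = (t.card : ℝ) * (A / ((2:ℝ) ^ k * C) ^ p) := by
          rw [Finset.sum_const, nsmul_eq_mul]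
      _ ≤ ((2:ℝ) ^ (k + 3)) ^ d * (A / ((2:ℝ) ^ k * C) ^ p) := by
          apply mul_le_mul_of_nonneg_right hcard' (by positivity)
      _ = A * 8 ^ d / C ^ p * r ^ k := hrw
  have hgeom : ∑ k ∈ Finset.range M, r ^ k ≤ (1 - r)⁻¹ := by
    calc ∑ k ∈ Finset.range M, r ^ k
        ≤ ∑' k : ℕ, r ^ k :=
          Summable.sum_le_tsum _ (fun k _ => pow_nonneg hr0.le k)
            (summable_geometric_of_lt_one hr0.le hr1)
      _ = (1 - r)⁻¹ := tsum_geometric_of_lt_one hr0.le hr1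
  calc ∑ k ∈ Finset.range M, ∑ i ∈ s with m i = k, A / ‖a i - b‖ ^ p
      ≤ ∑ k ∈ Finset.range M, A * 8 ^ d / C ^ p * r ^ k := Finset.sum_le_sum hterm
    _ = A * 8 ^ d / C ^ p * ∑ k ∈ Finset.range M, r ^ k := by rw [Finset.mul_sum]
    _ ≤ A * 8 ^ d / C ^ p * (1 - r)⁻¹ := by
        apply mul_le_mul_of_nonneg_left hgeom (by positivity)
    _ = A * 8 ^ d * (1 - r)⁻¹ / C ^ p := by ring

lemma dist_add_le_aux {X : Type*} [AddCommGroup X] [MetricSpace X]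
    (hinv : ∀ x y z : X, dist (x + z) (y + z) = dist x y)
    (w z t : X) : dist (w + z) t ≤ dist w 0 + dist z t := by
  have h := hinv w 0 z
  rw [zero_add] at h
  calc dist (w + z) t ≤ dist (w + z) z + dist z t := dist_triangle _ _ _
    _ = dist w 0 + dist z t := by rw [h]

lemma dist_sum_le_aux {X : Type*} [AddCommGroup X] [MetricSpace X]
    (hinv : ∀ x y z : X, dist (x + z) (y + z) = dist x y)
    {ι : Type*} (s : Finset ι) (g : ι → X) :
    dist (∑ i ∈ s, g i) 0 ≤ ∑ i ∈ s, dist (g i) 0 := by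
  induction s using Finset.cons_induction with
  | empty => simp
  | cons i s hi ih =>
    rw [Finset.sum_cons, Finset.sum_cons]
    calc dist (g i + ∑ j ∈ s, g j) 0 ≤ dist (g i) 0 + dist (∑ j ∈ s, g j) 0 :=
          dist_add_le_aux hinv _ _ _
      _ ≤ dist (g i) 0 + ∑ j ∈ s, dist (g j) 0 := add_le_add le_rfl ih

/-- if an operator group on a separable F-space satisfies a polynomial
decay estimate `‖T_a f‖ ≤ A/‖a‖^p` (with `p > d`) on a dense set, then it has the
uniform mixing property. -/
theorem stmt_13 {X : Type*} [AddCommGroup X] [Module ℝ X] [MetricSpace X]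
    [CompleteSpace X] [TopologicalSpace.SeparableSpace X]
    [IsTopologicalAddGroup X] [ContinuousSMul ℝ X]
    (hinv : ∀ x y z : X, dist (x + z) (y + z) = dist x y)
    {d : ℕ} (T : EuclideanSpace ℝ (Fin d) → X →L[ℝ] X)
    (hid : T 0 = ContinuousLinearMap.id ℝ X)
    (hadd : ∀ a b, T (a + b) = (T a).comp (T b))
    (p : ℝ) (hp : (d : ℝ) < p)
    (hdecay : ∃ D : Set X, Dense D ∧ ∀ f ∈ D, ∃ A : ℝ, 0 < A ∧
      ∀ a : EuclideanSpace ℝ (Fin d), 1 ≤ ‖a‖ →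
        dist (T a f) 0 ≤ A / ‖a‖ ^ p) :
    ∀ U V : Set X, IsOpen U → IsOpen V → U.Nonempty → V.Nonempty →
      ∃ C > (0:ℝ), ∀ q : ℕ, 1 ≤ q → ∀ a : Fin q → EuclideanSpace ℝ (Fin d),
        (∀ i, C ≤ ‖a i‖) → (∀ i j, i ≠ j → C ≤ ‖a i - a j‖) →
        ∃ f ∈ U, ∀ j, T (a j) f ∈ V := by
  intro U V hU hV ⟨u, hu⟩ ⟨v, hv⟩
  obtain ⟨D, hD, hDA⟩ := hdecay
  obtain ⟨εu, hεu, hUb⟩ := Metric.isOpen_iff.mp hU u hu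
  obtain ⟨εv, hεv, hVb⟩ := Metric.isOpen_iff.mp hV v hv
  obtain ⟨u', hu'D, hu'⟩ := hD.exists_dist_lt u (by linarith : (0:ℝ) < εu / 2)
  obtain ⟨v', hv'D, hv'⟩ := hD.exists_dist_lt v (by linarith : (0:ℝ) < εv / 2)
  obtain ⟨Au, hAu, hAud⟩ := hDA u' hu'D
  obtain ⟨Av, hAv, hAvd⟩ := hDA v' hv'D
  have hp0 : (0:ℝ) < p := lt_of_le_of_lt (Nat.cast_nonneg d) hp
  have h1r : (0:ℝ) < 1 - (2:ℝ) ^ ((d : ℝ) - p) := by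
    have := Real.rpow_lt_one_of_one_lt_of_neg one_lt_two (by linarith : (d : ℝ) - p < 0)
    linarith
  set K : ℝ := Av * 8 ^ d * (1 - (2:ℝ) ^ ((d : ℝ) - p))⁻¹ with hKdef
  have hK0 : 0 ≤ K := by
    apply mul_nonneg (mul_nonneg hAv.le (by positivity))
    exact inv_nonneg.mpr h1r.le
  set δ : ℝ := min (εu / 2) (εv / 2) with hδdef
  have hδ : 0 < δ := by rw [hδdef]; exact lt_min (by linarith) (by linarith)
  set B : ℝ := (Au + K) / δ with hBdef
  have hB : 0 < B := by rw [hBdef]; exact div_pos (by linarith) hδ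
  set C : ℝ := max 1 (B ^ p⁻¹) + 1 with hCdef
  have hC1 : 1 ≤ C := by
    rw [hCdef]
    have := le_max_left 1 (B ^ p⁻¹)
    linarith
  have hC0 : (0:ℝ) < C := lt_of_lt_of_le one_pos hC1
  have hCp : (0:ℝ) < C ^ p := Real.rpow_pos_of_pos hC0 _
  have hCB : B < C ^ p := by
    have h1 : B ^ p⁻¹ < C := by
      rw [hCdef]
      have := le_max_right 1 (B ^ p⁻¹)
      linarith
    have h2 : (B ^ p⁻¹) ^ p = B := by
      rw [← Real.rpow_mul hB.le, inv_mul_cancel₀ hp0.ne', Real.rpow_one]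
    calc B = (B ^ p⁻¹) ^ p := h2.symm
      _ < C ^ p := Real.rpow_lt_rpow (Real.rpow_nonneg hB.le _) h1 hp0
  have hmain : (Au + K) / C ^ p < δ := by
    rw [div_lt_iff₀ hCp]
    have h3 := (div_lt_iff₀ hδ).mp hCB
    linarith
  have hsplit : (Au + K) / C ^ p = Au / C ^ p + K / C ^ p := add_div _ _ _
  have hAuC : 0 ≤ Au / C ^ p := by positivity
  have hKC : 0 ≤ K / C ^ p := by positivity
  refine ⟨C, hC0, ?_⟩
  intro q _hq a ha hsep
  set f : X := u' + ∑ i : Fin q, T (-(a i)) v' with hfdef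
  -- estimate for the tail sum at a fixed center
  have hKform : ∀ (b : EuclideanSpace ℝ (Fin d)) (s : Finset (Fin q)),
      (∀ i ∈ s, C ≤ ‖a i - b‖) →
      ∑ i ∈ s, Av / ‖a i - b‖ ^ p ≤ K / C ^ p := by
    intro b s hfar
    have := sep_sum_decay hp hAv.le hC1 a b hsep s hfar
    rw [hKdef]
    exact this
  refine ⟨f, ?_, ?_⟩
  · -- f ∈ U
    apply hUb
    rw [mem_ball]
    have hS : dist (∑ i : Fin q, T (-(a i)) v') 0 ≤ K / C ^ p := by
      calc dist (∑ i : Fin q, T (-(a i)) v') 0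
          ≤ ∑ i : Fin q, dist (T (-(a i)) v') 0 := dist_sum_le_aux hinv _ _
        _ ≤ ∑ i : Fin q, Av / ‖a i - 0‖ ^ p := by
            apply Finset.sum_le_sum
            intro i _
            have h1 : (1:ℝ) ≤ ‖-(a i)‖ := by
              rw [norm_neg]; exact le_trans hC1 (ha i)
            have h2 := hAvd (-(a i)) h1
            rw [norm_neg] at h2
            rw [sub_zero]
            exact h2
        _ ≤ K / C ^ p := hKform 0 Finset.univ fun i _ => by
            rw [sub_zero]; exact ha i
    have hfu : dist f u ≤ dist (∑ i : Fin q, T (-(a i)) v') 0 + dist u' u := by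
      rw [hfdef, add_comm u']
      exact dist_add_le_aux hinv _ _ _
    have hdu : dist u' u < εu / 2 := by rw [dist_comm]; exact hu'
    have hδu : δ ≤ εu / 2 := by rw [hδdef]; exact min_le_left _ _
    have : K / C ^ p < δ := by
      calc K / C ^ p ≤ (Au + K) / C ^ p := by
            rw [hsplit]; linarith
        _ < δ := hmain
    calc dist f u ≤ dist (∑ i : Fin q, T (-(a i)) v') 0 + dist u' u := hfu
      _ < K / C ^ p + εu / 2 := by linarith [hS]
      _ < εu := by linarith
  · -- T (a j) f ∈ V
    intro j
    have hTf : T (a j) f = T (a j) u' +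
        (v' + ∑ i ∈ Finset.univ.erase j, T (a j + -(a i)) v') := by
      have h1 : T (a j) f = T (a j) u' + ∑ i : Fin q, T (a j) (T (-(a i)) v') := by
        rw [hfdef, map_add, map_sum]
      have h2 : ∀ i : Fin q, T (a j) (T (-(a i)) v') = T (a j + -(a i)) v' := by
        intro i
        rw [hadd (a j) (-(a i))]
        rfl
      rw [h1, Finset.sum_congr rfl fun i _ => h2 i,
        ← Finset.add_sum_erase Finset.univ _ (Finset.mem_univ j)]
      congr 1
      congr 1
      rw [add_neg_cancel, hid]
      rfl
    have hd1 : dist (T (a j) u') 0 ≤ Au / C ^ p := by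
      have h1 : (1:ℝ) ≤ ‖a j‖ := le_trans hC1 (ha j)
      calc dist (T (a j) u') 0 ≤ Au / ‖a j‖ ^ p := hAud (a j) h1
        _ ≤ Au / C ^ p := by
            apply div_le_div_of_nonneg_left hAu.le hCp
            exact Real.rpow_le_rpow hC0.le (ha j) hp0.le
    have hd2 : dist (∑ i ∈ Finset.univ.erase j, T (a j + -(a i)) v') 0 ≤ K / C ^ p := by
      calc dist (∑ i ∈ Finset.univ.erase j, T (a j + -(a i)) v') 0
          ≤ ∑ i ∈ Finset.univ.erase j, dist (T (a j + -(a i)) v') 0 :=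
            dist_sum_le_aux hinv _ _
        _ ≤ ∑ i ∈ Finset.univ.erase j, Av / ‖a i - a j‖ ^ p := by
            apply Finset.sum_le_sum
            intro i hi
            have hij : i ≠ j := Finset.ne_of_mem_erase hi
            have hCij : C ≤ ‖a i - a j‖ := hsep i j hij
            have h1 : (1:ℝ) ≤ ‖a j + -(a i)‖ := by
              rw [← sub_eq_add_neg, norm_sub_rev]
              exact le_trans hC1 hCij
            have h2 := hAvd (a j + -(a i)) h1
            rw [← sub_eq_add_neg, norm_sub_rev] at h2
            exact h2
        _ ≤ K / C ^ p := hKform (a j) (Finset.univ.erase j) fun i hi =>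
            hsep i j (Finset.ne_of_mem_erase hi)
    apply hVb
    rw [mem_ball]
    have hdv : dist v' v < εv / 2 := by rw [dist_comm]; exact hv'
    have hδv : δ ≤ εv / 2 := by rw [hδdef]; exact min_le_right _ _
    have hstep : dist (v' + ∑ i ∈ Finset.univ.erase j, T (a j + -(a i)) v') v
        ≤ dist (∑ i ∈ Finset.univ.erase j, T (a j + -(a i)) v') 0 + dist v' v := by
      rw [add_comm v']
      exact dist_add_le_aux hinv _ _ _
    calc dist (T (a j) f) v
        = dist (T (a j) u' + (v' + ∑ i ∈ Finset.univ.erase j, T (a j + -(a i)) v')) v := by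
          rw [hTf]
      _ ≤ dist (T (a j) u') 0
          + dist (v' + ∑ i ∈ Finset.univ.erase j, T (a j + -(a i)) v') v :=
          dist_add_le_aux hinv _ _ _
      _ ≤ Au / C ^ p + (K / C ^ p + εv / 2) := by linarith [hd1, hd2, hstep, hdv]
      _ < εv := by
          have : Au / C ^ p + K / C ^ p < δ := by rw [← hsplit]; exact hmain
          linarith
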